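/- Let k ≥ 3 and set v = 4k - 5 (the case c = 1). The block B = {0,1,...,k-3} ∪ {k-2, 2(k-2)+1} in Z_v has the property that the set of differences ±(y - x) for x ∈ B \ {k-2, 2(k-2)+1} and y ∈ {k-2, 2(k-2)+1}, together with ±((2(k-2)+1) - (k-2)), covers every nonzero residue of Z_{4k-5} exactly once. -/
import Mathlib


/-- The multiset of signed differences contributed by the base block
`{0,1,...,k-3} ∪ {k-2, 2(k-2)+1}` in `ℤ/(4k-5)`: `±(y - j)` for each introduced
element `y ∈ {k-2, 2(k-2)+1}` and each `j ∈ {0,...,k-3}`, together with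
`±((2(k-2)+1) - (k-2))`. -/
def baseBlockDiffs (k : ℕ) : Multiset (ZMod (4 * k - 5)) :=
  ({((2 * (k - 2) + 1 : ℕ) : ZMod (4 * k - 5)) - ((k - 2 : ℕ) : ZMod (4 * k - 5)),
    ((k - 2 : ℕ) : ZMod (4 * k - 5)) - ((2 * (k - 2) + 1 : ℕ) : ZMod (4 * k - 5))} :
      Multiset (ZMod (4 * k - 5))) +
  (Finset.range (k - 2)).val.bind (fun j =>
    ({((k - 2 : ℕ) : ZMod (4 * k - 5)) - (j : ZMod (4 * k - 5)),
      (j : ZMod (4 * k - 5)) - ((k - 2 : ℕ) : ZMod (4 * k - 5)),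
      ((2 * (k - 2) + 1 : ℕ) : ZMod (4 * k - 5)) - (j : ZMod (4 * k - 5)),
      (j : ZMod (4 * k - 5)) - ((2 * (k - 2) + 1 : ℕ) : ZMod (4 * k - 5))} :
        Multiset (ZMod (4 * k - 5))))

lemma cast_sub_helper {v : ℕ} (a b n : ℕ) (h : a = b + n ∨ a + v = b + n) :
    (a : ZMod v) - (b : ZMod v) = (n : ZMod v) := by
  rcases h with h | h
  · subst h; push_cast; ring
  · have h2 : ((a + v : ℕ) : ZMod v) = ((b + n : ℕ) : ZMod v) := by rw [h]
    push_cast [ZMod.natCast_self] at h2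
    linear_combination h2


/-- For `k ≥ 3` and `v = 4k - 5`, the differences of the base block
`{0,…,k-3, k-2, 2(k-2)+1}` involving an introduced element cover every nonzero
residue of `ℤ/(4k-5)` exactly once. -/
theorem base_block_covers_all_differences (k : ℕ) (hk : 3 ≤ k) :
    ∀ g : ZMod (4 * k - 5), g ≠ 0 → (baseBlockDiffs k).count g = 1 := by
  haveI : NeZero (4 * k - 5) := ⟨by omega⟩
  -- every nonzero element is in the multiset
  have hmem : ∀ h : ZMod (4 * k - 5), h ≠ 0 → h ∈ baseBlockDiffs k := by
    intro h hh
    have hv : ((h.val : ℕ) : ZMod (4 * k - 5)) = h := ZMod.natCast_rightInverse h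
    have h1 : 0 < h.val := Nat.pos_of_ne_zero (fun e => hh ((ZMod.val_eq_zero h).1 e))
    have h2 : h.val < 4 * k - 5 := ZMod.val_lt h
    rw [← hv]
    set n := h.val with hn
    unfold baseBlockDiffs
    rw [Multiset.mem_add]
    simp only [Multiset.mem_bind, Finset.mem_val, Finset.mem_range,
      Multiset.insert_eq_cons, Multiset.mem_cons, Multiset.mem_singleton]
    by_cases c1 : n ≤ k - 2
    · exact Or.inr ⟨k - 2 - n, by omega,
        Or.inl (cast_sub_helper _ _ _ (Or.inl (by omega))).symm⟩
    by_cases c2 : n = k - 1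
    · exact Or.inl (Or.inl (cast_sub_helper _ _ _ (Or.inl (by omega))).symm)
    by_cases c3 : n ≤ 2 * k - 3
    · exact Or.inr ⟨2 * k - 3 - n, by omega,
        Or.inr (Or.inr (Or.inl (cast_sub_helper _ _ _ (Or.inl (by omega))).symm))⟩
    by_cases c4 : n ≤ 3 * k - 5
    · exact Or.inr ⟨n - (2 * k - 2), by omega,
        Or.inr (Or.inr (Or.inr (cast_sub_helper _ _ _ (Or.inr (by omega))).symm))⟩
    by_cases c5 : n = 3 * k - 4
    · exact Or.inl (Or.inr (cast_sub_helper _ _ _ (Or.inr (by omega))).symm)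
    · exact Or.inr ⟨n - (3 * k - 3), by omega,
        Or.inr (Or.inl (cast_sub_helper _ _ _ (Or.inr (by omega))).symm)⟩
  -- cardinality
  have hcard : Multiset.card (baseBlockDiffs k) = 4 * k - 6 := by
    unfold baseBlockDiffs
    rw [Multiset.card_add, Multiset.card_bind,
      Multiset.map_congr rfl (fun x _ => by simp : ∀ x ∈ (Finset.range (k - 2)).val, _ = 4),
      Multiset.map_const', Multiset.sum_replicate]
    simp
    omega
  set S : Finset (ZMod (4 * k - 5)) := Finset.univ.erase 0 with hS
  have hScard : S.card = 4 * k - 6 := by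
    rw [hS, Finset.card_erase_of_mem (Finset.mem_univ _), Finset.card_univ, ZMod.card]
    omega
  have hle : S.val ≤ baseBlockDiffs k := by
    rw [Multiset.le_iff_subset S.nodup]
    intro x hx
    have : x ≠ 0 := (Finset.mem_erase.1 hx).1
    exact hmem x this
  have heq : S.val = baseBlockDiffs k :=
    Multiset.eq_of_le_of_card_le hle (by rw [hcard, ← Finset.card_def, hScard])
  intro g hg
  rw [← heq]
  exact Multiset.count_eq_one_of_mem S.nodup
    (Finset.mem_erase.2 ⟨hg, Finset.mem_univ g⟩)
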